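/- Let ξ be an irrational real number, let n be a positive integer, and let q ≥ 1 be the denominator of a convergent of the continued fraction expansion of ξ. Then there exist polynomials P₀, P₁, …, Pₙ with integer coefficients and degree at most n which form a ℤ-basis of the group of integer polynomials of degree at most n, and which satisfy |P_j^{[k]}(ξ)| ≤ 2ⁿ q^{2k−n} for all 0 ≤ j, k ≤ n. -/

import Mathlib

open Polynomial

/-- The height of an integer polynomial: the largest absolute value of its coefficients. -/
noncomputable def intPolyHeight (P : Polynomial ℤ) : ℝ :=
  ((P.support.sup fun k => (P.coeff k).natAbs : ℕ) : ℝ)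

/-- The `k`-th divided derivative of a real polynomial at `ξ`, i.e. the coefficient of
`(T - ξ)^k` in the Taylor expansion of `P` at `ξ`. -/
noncomputable def divDeriv (ξ : ℝ) (P : Polynomial ℝ) (k : ℕ) : ℝ :=
  (Polynomial.taylor ξ P).coeff k

/-- The `k`-th divided derivative at `ξ` of an integer polynomial, viewed over `ℝ`. -/
noncomputable def divDerivZ (ξ : ℝ) (P : Polynomial ℤ) (k : ℕ) : ℝ :=
  divDeriv ξ (P.map (Int.castRingHom ℝ)) k

/-- The multiset of complex roots of an integer polynomial (the conjugates of `α`, when `P`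
is the irreducible polynomial of `α`). -/
noncomputable def conjRoots (P : Polynomial ℤ) : Multiset ℂ :=
  (P.map (Int.castRingHom ℂ)).roots

/-- `q ≥ 1` is the denominator of a convergent of the continued fraction expansion of `ξ`. -/
def IsConvergentDenom (ξ : ℝ) (q : ℕ) : Prop :=
  1 ≤ q ∧ ∃ i : ℕ, (GenContFract.of ξ).dens i = (q : ℝ)

section AuxiliaryLemmas

lemma cf_data (ξ : ℝ) (hξ : Irrational ξ) (q : ℕ) (hq1 : 1 ≤ q)
    (i : ℕ) (hden : (GenContFract.of ξ).dens i = (q : ℝ)) :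
    ∃ (p p' : ℤ) (q' : ℕ), q' ≤ q ∧ (p * q' - p' * q = 1 ∨ p * q' - p' * q = -1) ∧
      |(q : ℝ) * ξ - p| ≤ 1 / q ∧ |(q' : ℝ) * ξ - p'| ≤ 1 / q := by
  set g := GenContFract.of ξ with hg
  have not_term : ∀ m, ¬g.TerminatedAt m := by
    intro m hm
    obtain ⟨r, hr⟩ := GenContFract.exists_rat_eq_of_terminates ⟨m, hm⟩
    exact hξ ⟨r, hr.symm⟩
  have hgp : ∀ m, ∃ z : ℤ, g.s.get? m = some ⟨1, (z : ℝ)⟩ := by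
    intro m
    obtain ⟨gp, hgp⟩ := Option.ne_none_iff_exists'.1 (not_term m)
    obtain ⟨ha, z, hb⟩ := GenContFract.of_partNum_eq_one_and_exists_int_partDen_eq hgp
    refine ⟨z, ?_⟩
    rw [hgp]
    cases gp with | mk a b => simp_all
  -- integrality of nums and dens
  have key : ∀ m, ((∃ p : ℤ, g.nums m = p) ∧ (∃ b : ℤ, g.dens m = b)) ∧
      ((∃ p : ℤ, g.nums (m+1) = p) ∧ (∃ b : ℤ, g.dens (m+1) = b)) := by
    intro m
    induction m with
    | zero =>
      obtain ⟨z, hz⟩ := hgp 0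
      refine ⟨⟨⟨⌊ξ⌋, ?_⟩, ⟨1, ?_⟩⟩, ⟨⟨z * ⌊ξ⌋ + 1, ?_⟩, ⟨z, ?_⟩⟩⟩
      · rw [g.zeroth_num_eq_h, GenContFract.of_h_eq_floor]
      · rw [g.zeroth_den_eq_one]; norm_num
      · rw [GenContFract.first_num_eq hz, GenContFract.of_h_eq_floor]; push_cast; ring
      · rw [GenContFract.first_den_eq hz]
    | succ m ih =>
      refine ⟨ih.2, ?_⟩
      obtain ⟨⟨p0, hp0⟩, ⟨b0, hb0⟩⟩ := ih.1
      obtain ⟨⟨p1, hp1⟩, ⟨b1, hb1⟩⟩ := ih.2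
      obtain ⟨z, hz⟩ := hgp (m+1)
      constructor
      · exact ⟨z * p1 + p0, by rw [GenContFract.nums_recurrence hz hp0 hp1]; push_cast; ring⟩
      · exact ⟨z * b1 + b0, by rw [GenContFract.dens_recurrence hz hb0 hb1]; push_cast; ring⟩
  -- dens are at least 1
  have hden1 : ∀ m, (1 : ℝ) ≤ g.dens m := by
    intro m
    induction m with
    | zero => rw [g.zeroth_den_eq_one]
    | succ m ih => exact le_trans ih GenContFract.of_den_mono
  rcases i with _ | m
  · -- i = 0 : q = 1
    have hq1' : q = 1 := by
      have := hden
      rw [g.zeroth_den_eq_one] at this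
      exact_mod_cast this.symm
    subst hq1'
    refine ⟨⌊ξ⌋, -1, 0, by norm_num, by norm_num, ?_, by norm_num⟩
    push_cast
    rw [one_mul, one_div_one]
    have h1 := Int.fract_nonneg ξ
    have h2 := Int.fract_lt_one ξ
    rw [Int.fract] at h1 h2
    rw [abs_le]
    constructor <;> linarith
  · -- i = m + 1
    obtain ⟨p', hp'⟩ := (key m).1.1
    obtain ⟨b0, hb0⟩ := (key m).1.2
    obtain ⟨p, hp⟩ := (key m).2.1
    have hb0nn : 0 ≤ b0 := by
      have h0 := hden1 m
      rw [hb0] at h0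
      exact_mod_cast le_trans zero_le_one h0
    set q' : ℕ := b0.toNat with hq'
    have hb0q' : g.dens m = (q' : ℝ) := by
      rw [hb0]; congr 1; omega
    have hq'1 : (1:ℝ) ≤ (q' : ℝ) := by rw [← hb0q']; exact hden1 m
    have hq'pos : (0:ℝ) < (q' : ℝ) := lt_of_lt_of_le one_pos hq'1
    have hqpos : (0:ℝ) < (q : ℝ) := by exact_mod_cast hq1
    have hq'q : q' ≤ q := by
      have := GenContFract.of_den_mono (v := ξ) (n := m)
      rw [hb0q', hden] at this
      exact_mod_cast this
    -- determinant
    have hdet := SimpContFract.determinant (s := SimpContFract.of ξ) (not_term m)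
    have hcoe : (↑(SimpContFract.of ξ) : GenContFract ℝ) = g := rfl
    rw [hcoe, hp', hden, hb0q', hp] at hdet
    have hdetZ : p' * (q : ℤ) - (q' : ℤ) * p = (-1)^(m+1) := by
      have : ((p' * (q : ℤ) - (q' : ℤ) * p : ℤ) : ℝ) = (((-1)^(m+1) : ℤ) : ℝ) := by
        push_cast
        convert hdet using 2
      exact_mod_cast this
    have hdet' : p * (q' : ℤ) - p' * (q : ℤ) = 1 ∨ p * (q' : ℤ) - p' * (q : ℤ) = -1 := by
      rcases Nat.even_or_odd (m+1) with he | ho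
      · right; rw [he.neg_one_pow] at hdetZ; linear_combination -hdetZ
      · left; rw [ho.neg_one_pow] at hdetZ; linear_combination -hdetZ
    refine ⟨p, p', q', hq'q, hdet', ?_, ?_⟩
    · -- |q ξ - p| ≤ 1/q
      have habs := GenContFract.abs_sub_convs_le (not_term (m+1))
      rw [g.conv_eq_num_div_den, hp, hden] at habs
      have hd2 : (q : ℝ) ≤ g.dens (m+2) := by
        rw [← hden]; exact GenContFract.of_den_mono
      have hd2pos : (0:ℝ) < g.dens (m+2) := lt_of_lt_of_le hqpos hd2
      have key2 : |(q:ℝ) * ξ - p| = (q:ℝ) * |ξ - p / q| := by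
        rw [← abs_of_pos hqpos, ← abs_mul]
        congr 1
        field_simp
        rw [abs_of_pos hqpos]; ring
      rw [key2]
      calc (q:ℝ) * |ξ - p / q| ≤ (q:ℝ) * (1 / ((q:ℝ) * g.dens (m+2))) :=
            mul_le_mul_of_nonneg_left habs (le_of_lt hqpos)
        _ = 1 / g.dens (m+2) := by field_simp
        _ ≤ 1 / q := by
            apply one_div_le_one_div_of_le hqpos hd2
    · -- |q' ξ - p'| ≤ 1/q
      have habs := GenContFract.abs_sub_convs_le (not_term m)
      rw [g.conv_eq_num_div_den, hp', hb0q', hden] at habs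
      have key2 : |(q':ℝ) * ξ - p'| = (q':ℝ) * |ξ - p' / q'| := by
        rw [← abs_of_pos hq'pos, ← abs_mul]
        congr 1
        field_simp
        rw [abs_of_pos hq'pos]; ring
      rw [key2]
      calc (q':ℝ) * |ξ - p' / q'| ≤ (q':ℝ) * (1 / ((q':ℝ) * q)) :=
            mul_le_mul_of_nonneg_left habs (le_of_lt hq'pos)
        _ = 1 / q := by field_simp


lemma nat_choose_le_two_pow (n k : ℕ) : n.choose k ≤ 2 ^ n := by
  rcases le_or_gt k n with h | h
  · calc n.choose k ≤ ∑ i ∈ Finset.range (n+1), n.choose i :=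
        Finset.single_le_sum (fun i _ => Nat.zero_le _) (Finset.mem_range.2 (by omega))
      _ = 2 ^ n := Nat.sum_range_choose n
  · rw [Nat.choose_eq_zero_of_lt h]; exact Nat.zero_le _

lemma coeff_lin_pow (A B : ℝ) (j s : ℕ) :
    ((C A * X + C B) ^ j).coeff s = A ^ s * B ^ (j - s) * (j.choose s) := by
  rcases le_or_gt s j with h | h
  · rw [add_pow, finset_sum_coeff]
    have key : ∀ m : ℕ, ((C A * X) ^ m * (C B) ^ (j - m) * ((j.choose m : ℕ) : ℝ[X])).coeff s
        = if s = m then A ^ m * B ^ (j - m) * (j.choose m) else 0 := by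
      intro m
      have h1 : (C A * X) ^ m * (C B) ^ (j - m) * ((j.choose m : ℕ) : ℝ[X])
          = C (A ^ m * B ^ (j - m) * (j.choose m)) * X ^ m := by
        rw [mul_pow, ← C_pow, ← C_pow, ← C_eq_natCast, C_mul, C_mul]
        ring
      rw [h1, coeff_C_mul, coeff_X_pow]
      split <;> simp
    rw [Finset.sum_congr rfl (fun m _ => key m), Finset.sum_ite_eq (Finset.range (j+1)) s]
    rw [if_pos (Finset.mem_range.2 (by omega))]
  · have h1 : ((C A * X + C B) ^ j).natDegree < s := by
      have h2 : (C A * X + C B).natDegree ≤ 1 := by compute_degree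
      calc ((C A * X + C B) ^ j).natDegree ≤ j * (C A * X + C B).natDegree :=
            natDegree_pow_le
        _ ≤ j * 1 := Nat.mul_le_mul_left j h2
        _ < s := by omega
    rw [coeff_eq_zero_of_natDegree_lt h1, Nat.choose_eq_zero_of_lt h]
    simp

lemma bound_aux (qr q'r aa bb : ℝ) (hqr : 1 ≤ qr) (hq'0 : 0 ≤ q'r) (hq'q : q'r ≤ qr)
    (ha : |aa| ≤ 1 / qr) (hb : |bb| ≤ 1 / qr) (n j k : ℕ) (hj : j ≤ n) :
    |((C qr * X + C aa) ^ j * (C q'r * X + C bb) ^ (n - j)).coeff k| * qr ^ n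
      ≤ 2 ^ n * qr ^ (2 * k) := by
  have hqr0 : (0:ℝ) < qr := lt_of_lt_of_le one_pos hqr
  rw [coeff_mul]
  have hterm : ∀ x ∈ Finset.HasAntidiagonal.antidiagonal k,
      |((C qr * X + C aa) ^ j).coeff x.1 * ((C q'r * X + C bb) ^ (n - j)).coeff x.2| * qr ^ n
        ≤ ((j.choose x.1 : ℝ) * ((n - j).choose x.2 : ℝ)) * qr ^ (2 * k) := by
    rintro ⟨s, t⟩ hst
    rw [Finset.HasAntidiagonal.mem_antidiagonal] at hst
    simp only at hst ⊢
    rw [coeff_lin_pow, coeff_lin_pow]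
    rcases le_or_gt s j with hsj | hsj
    · rcases le_or_gt t (n - j) with htj | htj
      · -- main case
        have e1 : |qr ^ s * aa ^ (j - s) * (j.choose s : ℝ)| * qr ^ j
            ≤ (j.choose s : ℝ) * qr ^ (2 * s) := by
          rw [abs_mul, abs_mul, abs_pow, abs_pow, abs_of_pos hqr0, Nat.abs_cast]
          have h2 : |aa| ^ (j - s) ≤ (1 / qr) ^ (j - s) :=
            pow_le_pow_left₀ (abs_nonneg _) ha _
          have h3 : qr ^ s * |aa| ^ (j - s) * (j.choose s : ℝ) * qr ^ j
              ≤ qr ^ s * (1 / qr) ^ (j - s) * (j.choose s : ℝ) * qr ^ j := by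
            have h30 := mul_le_mul_of_nonneg_left h2 (le_of_lt (pow_pos hqr0 s))
            exact mul_le_mul_of_nonneg_right
              (mul_le_mul_of_nonneg_right h30 (by positivity)) (by positivity)
          refine le_trans h3 (le_of_eq ?_)
          have h4 : qr ^ j = qr ^ (j - s) * qr ^ s := by rw [← pow_add]; congr 1; omega
          rw [h4]
          field_simp
          have hinv : qr ^ (j - s) * qr⁻¹ ^ (j - s) = 1 := by
            rw [← mul_pow, mul_inv_cancel₀ hqr0.ne', one_pow]
          linear_combination (qr ^ (s * 2) * (j.choose s : ℝ)) * hinv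
        have e2 : |q'r ^ t * bb ^ (n - j - t) * ((n - j).choose t : ℝ)| * qr ^ (n - j)
            ≤ ((n - j).choose t : ℝ) * qr ^ (2 * t) := by
          rw [abs_mul, abs_mul, abs_pow, abs_pow, abs_of_nonneg hq'0, Nat.abs_cast]
          have h2 : |bb| ^ (n - j - t) ≤ (1 / qr) ^ (n - j - t) :=
            pow_le_pow_left₀ (abs_nonneg _) hb _
          have h2' : q'r ^ t ≤ qr ^ t := pow_le_pow_left₀ hq'0 hq'q _
          have h3 : q'r ^ t * |bb| ^ (n - j - t) * (((n - j).choose t) : ℝ) * qr ^ (n - j)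
              ≤ qr ^ t * (1 / qr) ^ (n - j - t) * (((n - j).choose t) : ℝ) * qr ^ (n - j) := by
            have hbnn : (0:ℝ) ≤ |bb| ^ (n - j - t) := pow_nonneg (abs_nonneg _) _
            have h30 := mul_le_mul h2' h2 hbnn (le_of_lt (pow_pos hqr0 t))
            exact mul_le_mul_of_nonneg_right
              (mul_le_mul_of_nonneg_right h30 (by positivity)) (by positivity)
          refine le_trans h3 (le_of_eq ?_)
          have h4 : qr ^ (n - j) = qr ^ (n - j - t) * qr ^ t := by rw [← pow_add]; congr 1; omega
          rw [h4]
          field_simp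
          have hinv : qr ^ (n - j - t) * qr⁻¹ ^ (n - j - t) = 1 := by
            rw [← mul_pow, mul_inv_cancel₀ hqr0.ne', one_pow]
          linear_combination (qr ^ (t * 2) * ((n - j).choose t : ℝ)) * hinv
        have hsplit : qr ^ n = qr ^ j * qr ^ (n - j) := by rw [← pow_add]; congr 1; omega
        calc |qr ^ s * aa ^ (j-s) * (j.choose s : ℝ) * (q'r ^ t * bb ^ (n-j-t) * ((n-j).choose t : ℝ))| * qr ^ n
            = (|qr ^ s * aa ^ (j-s) * (j.choose s : ℝ)| * qr ^ j)
              * (|q'r ^ t * bb ^ (n-j-t) * ((n-j).choose t : ℝ)| * qr ^ (n - j)) := by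
              rw [abs_mul, hsplit]; ring
          _ ≤ ((j.choose s : ℝ) * qr ^ (2 * s)) * (((n-j).choose t : ℝ) * qr ^ (2 * t)) := by
              apply mul_le_mul e1 e2 (by positivity) (by positivity)
          _ = ((j.choose s : ℝ) * ((n - j).choose t : ℝ)) * qr ^ (2 * k) := by
              rw [← hst]
              rw [show 2 * (s + t) = 2 * s + 2 * t from by ring, pow_add]
              ring
      · rw [Nat.choose_eq_zero_of_lt htj]
        simp
    · rw [Nat.choose_eq_zero_of_lt hsj]
      simp
  calc |∑ x ∈ Finset.HasAntidiagonal.antidiagonal k,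
          ((C qr * X + C aa) ^ j).coeff x.1 * ((C q'r * X + C bb) ^ (n - j)).coeff x.2| * qr ^ n
      ≤ (∑ x ∈ Finset.HasAntidiagonal.antidiagonal k,
          |((C qr * X + C aa) ^ j).coeff x.1 * ((C q'r * X + C bb) ^ (n - j)).coeff x.2|) * qr ^ n := by
        apply mul_le_mul_of_nonneg_right (Finset.abs_sum_le_sum_abs _ _) (by positivity)
    _ = ∑ x ∈ Finset.HasAntidiagonal.antidiagonal k,
          |((C qr * X + C aa) ^ j).coeff x.1 * ((C q'r * X + C bb) ^ (n - j)).coeff x.2| * qr ^ n := by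
        rw [Finset.sum_mul]
    _ ≤ ∑ x ∈ Finset.HasAntidiagonal.antidiagonal k,
          ((j.choose x.1 : ℝ) * ((n - j).choose x.2 : ℝ)) * qr ^ (2 * k) :=
        Finset.sum_le_sum hterm
    _ = (n.choose k : ℝ) * qr ^ (2 * k) := by
        rw [← Finset.sum_mul]
        congr 1
        rw [show n = j + (n - j) from by omega, Nat.add_choose_eq]
        push_cast
        rw [show j + (n - j) - j = n - j from by omega]
    _ ≤ 2 ^ n * qr ^ (2 * k) := by
        apply mul_le_mul_of_nonneg_right _ (by positivity)
        exact_mod_cast nat_choose_le_two_pow n k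

lemma span_basis_aux (n : ℕ) (qz q'z p p' : ℤ)
    (hdet : p * q'z - p' * qz = 1 ∨ p * q'z - p' * qz = -1) :
    ∃ B : Module.Basis (Fin (n + 1)) ℤ (Polynomial.degreeLT ℤ (n + 1)),
      ∀ j : Fin (n + 1), (B j : Polynomial ℤ)
        = (C qz * X - C p) ^ (j : ℕ) * (C q'z * X - C p') ^ (n - (j : ℕ)) := by
  set L : ℤ[X] := C qz * X - C p with hLdef
  set M : ℤ[X] := C q'z * X - C p' with hMdef
  set e : ℤ := p * q'z - p' * qz with hedef
  have he2 : e * e = 1 := by rcases hdet with h | h <;> rw [h] <;> norm_num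
  -- the span filtration
  set S : ℕ → Submodule ℤ (Polynomial ℤ) :=
    fun m => Submodule.span ℤ {P : ℤ[X] | ∃ s t : ℕ, s + t = m ∧ P = L ^ s * M ^ t} with hSdef
  have step : ∀ (a b : ℤ) (m : ℕ) (P : ℤ[X]), P ∈ S m → (C a * L + C b * M) * P ∈ S (m + 1) := by
    intro a b m P hP
    induction hP using Submodule.span_induction with
    | mem x hx =>
      obtain ⟨s, t, hst, rfl⟩ := hx
      have hrw : (C a * L + C b * M) * (L ^ s * M ^ t)
          = a • (L ^ (s+1) * M ^ t) + b • (L ^ s * M ^ (t+1)) := by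
        simp only [smul_eq_C_mul]
        ring
      rw [hrw]
      exact Submodule.add_mem _
        (Submodule.smul_mem _ _ (Submodule.subset_span ⟨s+1, t, by omega, rfl⟩))
        (Submodule.smul_mem _ _ (Submodule.subset_span ⟨s, t+1, by omega, rfl⟩))
    | zero => rw [mul_zero]; exact Submodule.zero_mem _
    | add x y hx hy ihx ihy => rw [mul_add]; exact Submodule.add_mem _ ihx ihy
    | smul c x hx ih => rw [mul_smul_comm]; exact Submodule.smul_mem _ _ ih
  have haux : ∀ (a b c d : ℤ) (i j : ℕ),
      (C a * L + C b * M) ^ i * (C c * L + C d * M) ^ j ∈ S (i + j) := by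
    intro a b c d i j
    induction i with
    | zero =>
      simp only [pow_zero, one_mul, Nat.zero_add]
      induction j with
      | zero => exact Submodule.subset_span ⟨0, 0, rfl, by simp⟩
      | succ j ihj =>
        rw [pow_succ']
        exact step c d j _ ihj
    | succ i ihi =>
      rw [pow_succ', mul_assoc]
      have := step a b (i + j) _ ihi
      rwa [show i + j + 1 = i + 1 + j from by omega] at this
  -- X and 1 are such combinations
  have hC : (C e * (C p * C q'z - C p' * C qz) : ℤ[X]) = 1 := by
    have h : e * (p * q'z - p' * qz) = 1 := by rw [← hedef]; exact he2
    rw [← C_mul, ← C_mul, ← C_sub, ← C_mul, h, C_1]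
  have hX1 : (X : ℤ[X]) = C (-(e * p')) * L + C (e * p) * M := by
    rw [hLdef, hMdef]
    simp only [C_neg, C_mul]
    linear_combination (-(X : ℤ[X])) * hC
  have h11 : (1 : ℤ[X]) = C (-(e * q'z)) * L + C (e * qz) * M := by
    rw [hLdef, hMdef]
    simp only [C_neg, C_mul]
    linear_combination -hC
  have hXpow : ∀ k : ℕ, k ≤ n → (X : ℤ[X]) ^ k ∈ S n := by
    intro k hk
    have heq : (X : ℤ[X]) ^ k
        = (C (-(e * p')) * L + C (e * p) * M) ^ k
          * (C (-(e * q'z)) * L + C (e * qz) * M) ^ (n - k) := by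
      rw [← hX1, ← h11, one_pow, mul_one]
    rw [heq]
    have := haux (-(e * p')) (e * p) (-(e * q'z)) (e * qz) k (n - k)
    rwa [show k + (n - k) = n from by omega] at this
  -- degree bounds
  have hL1 : L.natDegree ≤ 1 := by rw [hLdef]; compute_degree
  have hM1 : M.natDegree ≤ 1 := by rw [hMdef]; compute_degree
  have hprod : ∀ s t : ℕ, (L ^ s * M ^ t).natDegree ≤ s + t := by
    intro s t
    calc (L ^ s * M ^ t).natDegree ≤ (L ^ s).natDegree + (M ^ t).natDegree := natDegree_mul_le
      _ ≤ s * L.natDegree + t * M.natDegree := add_le_add natDegree_pow_le natDegree_pow_le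
      _ ≤ s * 1 + t * 1 := add_le_add (Nat.mul_le_mul_left s hL1) (Nat.mul_le_mul_left t hM1)
      _ = s + t := by omega
  have hmemdeg : ∀ P : ℤ[X], P.natDegree ≤ n → P ∈ degreeLT ℤ (n + 1) := by
    intro P hP
    rw [mem_degreeLT]
    calc P.degree ≤ (P.natDegree : WithBot ℕ) := degree_le_natDegree
      _ < ((n + 1 : ℕ) : WithBot ℕ) := by exact_mod_cast Nat.lt_succ_of_le hP
  have hdegS : ∀ P : ℤ[X], P ∈ degreeLT ℤ (n + 1) → P ∈ S n := by
    intro P hP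
    by_cases h0 : P = 0
    · rw [h0]; exact Submodule.zero_mem _
    have hdeg : P.natDegree < n + 1 := (natDegree_lt_iff_degree_lt h0).2 (mem_degreeLT.1 hP)
    rw [P.as_sum_range' (n + 1) hdeg]
    apply Submodule.sum_mem
    intro i hi
    rw [← C_mul_X_pow_eq_monomial, ← smul_eq_C_mul]
    exact Submodule.smul_mem _ _ (hXpow i (by
      have := Finset.mem_range.1 hi; omega))
  -- the candidate family inside degreeLT
  have hmemP : ∀ j : Fin (n + 1), L ^ (j : ℕ) * M ^ (n - (j : ℕ)) ∈ degreeLT ℤ (n + 1) := by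
    intro j
    exact hmemdeg _ (le_trans (hprod _ _) (by have := j.isLt; omega))
  set Pel : Fin (n + 1) → (degreeLT ℤ (n + 1)) :=
    fun j => ⟨L ^ (j : ℕ) * M ^ (n - (j : ℕ)), hmemP j⟩ with hPel
  set glc := Fintype.linearCombination ℤ Pel with hglc
  have hrange : LinearMap.range glc = ⊤ := by
    rw [hglc, Fintype.range_linearCombination]
    rw [Submodule.eq_top_iff']
    intro x
    have hx : (x : ℤ[X]) ∈ S n := hdegS _ x.2
    have himg : Submodule.map (degreeLT ℤ (n + 1)).subtype (Submodule.span ℤ (Set.range Pel))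
        = Submodule.span ℤ (Set.range fun j : Fin (n + 1) => L ^ (j : ℕ) * M ^ (n - (j : ℕ))) := by
      rw [Submodule.map_span]
      congr 1
      rw [← Set.range_comp]
      rfl
    have hS_le : S n ≤ Submodule.span ℤ
        (Set.range fun j : Fin (n + 1) => L ^ (j : ℕ) * M ^ (n - (j : ℕ))) := by
      rw [hSdef]
      apply Submodule.span_le.2
      rintro y ⟨s, t, hst, rfl⟩
      apply Submodule.subset_span
      refine ⟨⟨s, by omega⟩, ?_⟩
      show L ^ s * M ^ (n - s) = L ^ s * M ^ t
      rw [show n - s = t from by omega]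
    have hx2 : (x : ℤ[X]) ∈ Submodule.map (degreeLT ℤ (n + 1)).subtype
        (Submodule.span ℤ (Set.range Pel)) := by
      rw [himg]; exact hS_le hx
    obtain ⟨y, hy, hyx⟩ := hx2
    have : y = x := Subtype.ext hyx
    rwa [← this]
  have hsurj : Function.Surjective glc := LinearMap.range_eq_top.1 hrange
  set endo := ((degreeLTEquiv ℤ (n + 1)).toLinearMap).comp glc with hendo
  have hendosurj : Function.Surjective endo := by
    rw [hendo]
    exact (degreeLTEquiv ℤ (n + 1)).surjective.comp hsurj
  have hinj : Function.Injective glc := by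
    have h := OrzechProperty.injective_of_surjective_endomorphism endo hendosurj
    intro x y hxy
    apply h
    simp only [hendo, LinearMap.comp_apply, hxy]
  refine ⟨(Pi.basisFun ℤ (Fin (n + 1))).map (LinearEquiv.ofBijective glc (show Function.Bijective glc from ⟨hinj, hsurj⟩)), ?_⟩
  intro j
  rw [Module.Basis.map_apply, Pi.basisFun_apply, LinearEquiv.ofBijective_apply, hglc,
    Fintype.linearCombination_apply_single]
  rw [one_smul]

end AuxiliaryLemmas

/-- Basis of small polynomials: if `q ≥ 1` is the denominator of a convergent of the
irrational number `ξ`, then there is a `ℤ`-basis `P₀, …, Pₙ` of the group of integer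
polynomials of degree at most `n` satisfying `|P_j^{[k]}(ξ)| ≤ 2^n q^(2k-n)` for all
`0 ≤ j, k ≤ n`. -/
theorem basis_of_small_polynomials
    (ξ : ℝ) (hξ : Irrational ξ) (n : ℕ) (hn : 0 < n) (q : ℕ)
    (hq : IsConvergentDenom ξ q) :
    ∃ P : Fin (n + 1) → Polynomial ℤ,
      (∀ j, (P j).natDegree ≤ n) ∧
      (∃ B : Module.Basis (Fin (n + 1)) ℤ (Polynomial.degreeLT ℤ (n + 1)),
        ∀ j, (B j : Polynomial ℤ) = P j) ∧
      ∀ j, ∀ k ≤ n, |divDerivZ ξ (P j) k| ≤ 2 ^ n * (q : ℝ) ^ (2 * (k : ℝ) - n) := by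
  obtain ⟨hq1, i, hden⟩ := hq
  obtain ⟨p, p', q', hq'q, hdet, hLa, hMb⟩ := cf_data ξ hξ q hq1 i hden
  refine ⟨fun j => (C (q:ℤ) * X - C p) ^ (j:ℕ) * (C (q':ℤ) * X - C p') ^ (n - (j:ℕ)),
    ?_, ?_, ?_⟩
  · -- degrees
    intro j
    have hL1 : (C (q:ℤ) * X - C p).natDegree ≤ 1 := by compute_degree
    have hM1 : (C (q':ℤ) * X - C p').natDegree ≤ 1 := by compute_degree
    calc ((C (q:ℤ) * X - C p) ^ (j:ℕ) * (C (q':ℤ) * X - C p') ^ (n - (j:ℕ))).natDegree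
        ≤ ((C (q:ℤ) * X - C p) ^ (j:ℕ)).natDegree
          + ((C (q':ℤ) * X - C p') ^ (n - (j:ℕ))).natDegree := natDegree_mul_le
      _ ≤ (j:ℕ) * (C (q:ℤ) * X - C p).natDegree
          + (n - (j:ℕ)) * (C (q':ℤ) * X - C p').natDegree :=
          add_le_add natDegree_pow_le natDegree_pow_le
      _ ≤ (j:ℕ) * 1 + (n - (j:ℕ)) * 1 :=
          add_le_add (Nat.mul_le_mul_left _ hL1) (Nat.mul_le_mul_left _ hM1)
      _ ≤ n := by have := j.isLt; omega
  · -- basis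
    exact span_basis_aux n (q:ℤ) (q':ℤ) p p' hdet
  · -- bounds
    intro j k hk
    simp only [divDerivZ, divDeriv]
    have hmap : (((C (q:ℤ) * X - C p) ^ (j:ℕ) * (C (q':ℤ) * X - C p') ^ (n - (j:ℕ))).map
          (Int.castRingHom ℝ))
        = (C (q:ℝ) * X - C (p:ℝ)) ^ (j:ℕ) * (C (q':ℝ) * X - C (p':ℝ)) ^ (n - (j:ℕ)) := by
      simp only [Polynomial.map_mul, Polynomial.map_pow, Polynomial.map_sub, Polynomial.map_C,
        Polynomial.map_X, Int.coe_castRingHom, Int.cast_natCast]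
    rw [hmap]
    have htay : taylor ξ ((C (q:ℝ) * X - C (p:ℝ)) ^ (j:ℕ)
          * (C (q':ℝ) * X - C (p':ℝ)) ^ (n - (j:ℕ)))
        = (C (q:ℝ) * X + C ((q:ℝ) * ξ - (p:ℝ))) ^ (j:ℕ)
          * (C (q':ℝ) * X + C ((q':ℝ) * ξ - (p':ℝ))) ^ (n - (j:ℕ)) := by
      simp only [taylor_apply, mul_comp, pow_comp, sub_comp, C_comp, X_comp]
      have h1 : C (q:ℝ) * (X + C ξ) - C (p:ℝ) = C (q:ℝ) * X + C ((q:ℝ) * ξ - (p:ℝ)) := by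
        rw [C_sub, C_mul]; ring
      have h2 : C (q':ℝ) * (X + C ξ) - C (p':ℝ) = C (q':ℝ) * X + C ((q':ℝ) * ξ - (p':ℝ)) := by
        rw [C_sub, C_mul]; ring
      rw [h1, h2]
    rw [htay]
    have hq1' : (1:ℝ) ≤ (q:ℝ) := by exact_mod_cast hq1
    have hq'0 : (0:ℝ) ≤ (q':ℝ) := Nat.cast_nonneg _
    have hq'le : (q':ℝ) ≤ (q:ℝ) := by exact_mod_cast hq'q
    have hb := bound_aux (q:ℝ) (q':ℝ) ((q:ℝ) * ξ - (p:ℝ)) ((q':ℝ) * ξ - (p':ℝ))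
      hq1' hq'0 hq'le hLa hMb n (j:ℕ) k (by have := j.isLt; omega)
    have hqpos : (0:ℝ) < (q:ℝ) := lt_of_lt_of_le one_pos hq1'
    have hrpow : (q:ℝ) ^ (2 * (k:ℝ) - (n:ℝ)) = (q:ℝ) ^ (2 * k) / (q:ℝ) ^ n := by
      rw [show (2 * (k:ℝ) - (n:ℝ)) = ((2 * k : ℕ) : ℝ) - ((n : ℕ) : ℝ) from by push_cast; ring]
      rw [Real.rpow_sub hqpos, Real.rpow_natCast, Real.rpow_natCast]
    rw [hrpow, ← mul_div_assoc, le_div_iff₀ (pow_pos hqpos n)]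
    calc |((C (q:ℝ) * X + C ((q:ℝ) * ξ - (p:ℝ))) ^ (j:ℕ)
          * (C (q':ℝ) * X + C ((q':ℝ) * ξ - (p':ℝ))) ^ (n - (j:ℕ))).coeff k| * (q:ℝ) ^ n
        ≤ 2 ^ n * (q:ℝ) ^ (2 * k) := hb
      _ = 2 ^ n * ((q:ℝ) ^ (2 * k)) := rfl
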